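/- Let ℓ ≥ 2 be an even integer. There exists a constant C_ℓ > 0 depending only on ℓ such that the following holds. Let n ≥ 1 and let A be a random symmetric n×n matrix with E A = P ∈ ℝ^{n×n}, whose upper-triangular error entries {(A − P)_{ij} : 1 ≤ i ≤ j ≤ n} are mutually independent (ν, b)-sub-gamma random variables. Define ρ̃ = ∑_{1≤i≤j≤n} (A − P)_{ij}² / (16 n(n+1)) and τ = E ρ̃. Then for every t > 0, Pr[|ρ̃ − τ| > t] ≤ C_ℓ (ν + b²)^ℓ / (n t)^ℓ. -/

import Mathlib

open Matrix MeasureTheory ProbabilityTheory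
open scoped BigOperators ENNReal

/-- A centered real random variable `Z` is `(ν, b)`-sub-gamma if both `Z` and `−Z` have
cumulant generating function satisfying `ψ(t) ≤ t²ν/(2(1 − bt))` for all `0 < t` with
`bt < 1` (for all `t > 0` when `b = 0`). -/
def IsSubGamma {Ω : Type*} [MeasurableSpace Ω] (μ : Measure Ω) (Z : Ω → ℝ) (ν b : ℝ) : Prop :=
  0 ≤ ν ∧ 0 ≤ b ∧ Integrable Z μ ∧ (∫ ω, Z ω ∂μ) = 0 ∧
  ∀ t : ℝ, 0 < t → b * t < 1 →
    Integrable (fun ω => Real.exp (t * Z ω)) μ ∧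
    Integrable (fun ω => Real.exp (-(t * Z ω))) μ ∧
    Real.log (∫ ω, Real.exp (t * Z ω) ∂μ) ≤ t ^ 2 * ν / (2 * (1 - b * t)) ∧
    Real.log (∫ ω, Real.exp (-(t * Z ω)) ∂μ) ≤ t ^ 2 * ν / (2 * (1 - b * t))

/-- pointwise bound : x^(2k) ≤ (2k)! * (exp x + exp (-x)) -/
lemma pow_le_exp_add_exp (x : ℝ) (k : ℕ) :
    x ^ (2 * k) ≤ (2 * k).factorial * (Real.exp x + Real.exp (-x)) := by
  have h1 : x ^ (2 * k) = |x| ^ (2 * k) := (even_two_mul k).pow_abs x |>.symm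
  have h2 : |x| ^ (2 * k) / (2 * k).factorial ≤ Real.exp |x| :=
    Real.pow_div_factorial_le_exp _ (abs_nonneg x) _
  have h3 : Real.exp |x| ≤ Real.exp x + Real.exp (-x) := by
    rcases abs_cases x with ⟨h, _⟩ | ⟨h, _⟩
    · rw [h]; nlinarith [Real.exp_pos (-x)]
    · rw [h]; nlinarith [Real.exp_pos x]
  have hf : (0:ℝ) < (2 * k).factorial := by positivity
  calc x ^ (2 * k) = |x| ^ (2 * k) := h1
    _ ≤ (2 * k).factorial * Real.exp |x| := by
        rw [div_le_iff₀ hf] at h2; linarith [h2]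
    _ ≤ _ := by nlinarith [Real.exp_pos x, Real.exp_pos (-x)]

/-- moment bound for sub-gamma with slack σ'. -/
lemma subGamma_moment_aux {Ω : Type*} [MeasurableSpace Ω] {μ : Measure Ω}
    [IsProbabilityMeasure μ] {Z : Ω → ℝ} {ν b : ℝ} (hZ : IsSubGamma μ Z ν b)
    (hZm : Measurable Z) (k : ℕ) {s : ℝ} (hs : 0 < s) (hsb : ν + b ^ 2 ≤ s) :
    Integrable (fun ω => Z ω ^ (2 * k)) μ ∧
      ∫ ω, Z ω ^ (2 * k) ∂μ ≤ (2 * k).factorial * 4 * (4 * s) ^ k := by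
  obtain ⟨hν, hb, hZi, hZ0, hmgf⟩ := hZ
  set σ : ℝ := Real.sqrt s with hσdef
  have hσ : 0 < σ := Real.sqrt_pos.2 hs
  set t₀ : ℝ := 1 / (2 * σ) with ht₀def
  have ht₀ : 0 < t₀ := by positivity
  have hσsq : σ ^ 2 = s := Real.sq_sqrt hs.le
  have hbσ : b ≤ σ := by
    nlinarith [Real.sq_sqrt hs.le, Real.sqrt_nonneg s]
  have hbt : b * t₀ ≤ 1 / 2 := by
    rw [ht₀def, mul_one_div, div_le_div_iff₀ (by positivity) (by norm_num : (0:ℝ) < 2)]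
    nlinarith
  have hbt1 : b * t₀ < 1 := lt_of_le_of_lt hbt (by norm_num)
  obtain ⟨hi1, hi2, hl1, hl2⟩ := hmgf t₀ ht₀ hbt1
  have hquarter : t₀ ^ 2 * ν / (2 * (1 - b * t₀)) ≤ 1 / 4 := by
    have h1 : (1:ℝ) ≤ 2 * (1 - b * t₀) := by linarith
    have h2 : t₀ ^ 2 * ν ≤ 1 / 4 := by
      have : t₀ ^ 2 = 1 / (4 * σ ^ 2) := by rw [ht₀def]; field_simp; ring
      rw [this]
      rw [div_mul_eq_mul_div, div_le_div_iff₀ (by positivity) (by norm_num)]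
      nlinarith
    calc t₀ ^ 2 * ν / (2 * (1 - b * t₀)) ≤ t₀ ^ 2 * ν / 1 := by
          apply div_le_div_of_nonneg_left _ one_pos h1 <;> positivity
      _ ≤ 1/4 := by simpa using h2
  have key : ∀ g : Ω → ℝ, Integrable (fun ω => Real.exp (g ω)) μ →
      Real.log (∫ ω, Real.exp (g ω) ∂μ) ≤ 1/4 → ∫ ω, Real.exp (g ω) ∂μ ≤ 2 := by
    intro g hgi hgl
    have hpos : 0 < ∫ ω, Real.exp (g ω) ∂μ := integral_exp_pos hgi
    have := (Real.log_le_iff_le_exp hpos).1 hgl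
    calc ∫ ω, Real.exp (g ω) ∂μ ≤ Real.exp (1/4) := this
      _ ≤ 2 := by
        have h4 : Real.exp (1/4) ^ 4 = Real.exp 1 := by
          rw [← Real.exp_nat_mul]; norm_num
        by_contra hc
        push_neg at hc
        have : (2:ℝ) ^ 4 < Real.exp (1/4) ^ 4 :=
          pow_lt_pow_left₀ hc (by norm_num) (by norm_num)
        rw [h4] at this
        nlinarith [Real.exp_one_lt_d9]
  have hb1 : ∫ ω, Real.exp (t₀ * Z ω) ∂μ ≤ 2 := key _ hi1 (le_trans hl1 hquarter)
  have hb2 : ∫ ω, Real.exp (-(t₀ * Z ω)) ∂μ ≤ 2 := key _ hi2 (le_trans hl2 hquarter)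
  have hcoef : (0:ℝ) ≤ ((2 * k).factorial : ℝ) * (4 * s) ^ k := by positivity
  have hptw : ∀ ω, Z ω ^ (2 * k) ≤
      ((2 * k).factorial : ℝ) * (4 * s) ^ k *
        (Real.exp (t₀ * Z ω) + Real.exp (-(t₀ * Z ω))) := by
    intro ω
    have h := pow_le_exp_add_exp (t₀ * Z ω) k
    have hexp : (t₀ * Z ω) ^ (2 * k) = t₀ ^ (2 * k) * Z ω ^ (2 * k) := mul_pow _ _ _
    have ht2k : t₀ ^ (2 * k) * (4 * s) ^ k = 1 := by
      have : t₀ ^ (2 * k) = (t₀ ^ 2) ^ k := by rw [← pow_mul]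
      rw [this, ← mul_pow]
      have ht2 : t₀ ^ 2 * (4 * s) = 1 := by
        rw [ht₀def]
        field_simp
        nlinarith [hσsq]
      rw [ht2, one_pow]
    have h4s : (0:ℝ) < (4 * s) ^ k := by positivity
    calc Z ω ^ (2 * k) = t₀ ^ (2 * k) * Z ω ^ (2 * k) * (4 * s) ^ k := by
          rw [mul_comm (t₀ ^ (2*k)) _, mul_assoc, ht2k, mul_one]
      _ = (t₀ * Z ω) ^ (2 * k) * (4 * s) ^ k := by rw [hexp]
      _ ≤ ((2 * k).factorial : ℝ) * (Real.exp (t₀ * Z ω) + Real.exp (-(t₀ * Z ω))) * (4 * s) ^ k := by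
          exact mul_le_mul_of_nonneg_right h h4s.le
      _ = _ := by ring
  have hG : Integrable (fun ω => ((2 * k).factorial : ℝ) * (4 * s) ^ k *
      (Real.exp (t₀ * Z ω) + Real.exp (-(t₀ * Z ω)))) μ := ((hi1.add hi2).const_mul _)
  have hnn : ∀ ω, (0:ℝ) ≤ Z ω ^ (2 * k) := fun ω => (even_two_mul k).pow_nonneg _
  have hint : Integrable (fun ω => Z ω ^ (2 * k)) μ := by
    refine hG.mono' ((hZm.pow_const _).aestronglyMeasurable) ?_
    filter_upwards with ω
    rw [Real.norm_eq_abs, abs_of_nonneg (hnn ω)]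
    exact hptw ω
  refine ⟨hint, ?_⟩
  calc ∫ ω, Z ω ^ (2 * k) ∂μ
      ≤ ∫ ω, ((2 * k).factorial : ℝ) * (4 * s) ^ k *
          (Real.exp (t₀ * Z ω) + Real.exp (-(t₀ * Z ω))) ∂μ :=
        integral_mono hint hG hptw
    _ = ((2 * k).factorial : ℝ) * (4 * s) ^ k *
          ((∫ ω, Real.exp (t₀ * Z ω) ∂μ) + ∫ ω, Real.exp (-(t₀ * Z ω)) ∂μ) := by
        rw [integral_const_mul, integral_add hi1 hi2]
    _ ≤ ((2 * k).factorial : ℝ) * (4 * s) ^ k * 4 := by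
        apply mul_le_mul_of_nonneg_left _ hcoef
        linarith
    _ = (2 * k).factorial * 4 * (4 * s) ^ k := by ring

lemma subGamma_moment {Ω : Type*} [MeasurableSpace Ω] {μ : Measure Ω}
    [IsProbabilityMeasure μ] {Z : Ω → ℝ} {ν b : ℝ} (hZ : IsSubGamma μ Z ν b)
    (hZm : Measurable Z) (k : ℕ) :
    Integrable (fun ω => Z ω ^ (2 * k)) μ ∧
      ∫ ω, Z ω ^ (2 * k) ∂μ ≤ (2 * k).factorial * 4 * 4 ^ k * (ν + b ^ 2) ^ k := by
  have hν := hZ.1; have hb := hZ.2.1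
  have h0 : (0:ℝ) ≤ ν + b ^ 2 := by positivity
  have hint := (subGamma_moment_aux hZ hZm k (s := ν + b ^ 2 + 1) (by positivity)
    (by linarith)).1
  refine ⟨hint, ?_⟩
  have hf : ContinuousAt (fun ε : ℝ => ((2 * k).factorial : ℝ) * 4 * (4 * (ν + b ^ 2 + ε)) ^ k) 0 := by
    fun_prop
  have htend : Filter.Tendsto (fun ε : ℝ => ((2 * k).factorial : ℝ) * 4 * (4 * (ν + b ^ 2 + ε)) ^ k)
      (nhdsWithin 0 (Set.Ioi 0)) (nhds (((2 * k).factorial : ℝ) * 4 * 4 ^ k * (ν + b ^ 2) ^ k)) := by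
    have h2 := hf.tendsto.mono_left (nhdsWithin_le_nhds (s := Set.Ioi (0:ℝ)))
    simpa [mul_pow, mul_assoc] using h2
  refine ge_of_tendsto htend ?_
  filter_upwards [self_mem_nhdsWithin] with ε hε
  have hε' : (0:ℝ) < ε := Set.mem_Ioi.1 hε
  exact (subGamma_moment_aux hZ hZm k (by positivity) (by linarith)).2

lemma centered_sq_moment {Ω : Type*} [MeasurableSpace Ω] {μ : Measure Ω}
    [IsProbabilityMeasure μ] {Z : Ω → ℝ} {ν b : ℝ} (hZ : IsSubGamma μ Z ν b)
    (hZm : Measurable Z) (c : ℕ) :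
    Integrable (fun ω => (Z ω ^ 2 - ∫ ω', Z ω' ^ 2 ∂μ) ^ c) μ ∧
      ∫ ω, |Z ω ^ 2 - ∫ ω', Z ω' ^ 2 ∂μ| ^ c ∂μ ≤
        (2 * c).factorial * 4 * 132 ^ c * (ν + b ^ 2) ^ c := by
  have hν := hZ.1; have hb := hZ.2.1
  set σ2 : ℝ := ν + b ^ 2 with hσ2
  have hσ2nn : (0:ℝ) ≤ σ2 := by positivity
  set m : ℝ := ∫ ω', Z ω' ^ 2 ∂μ with hm
  have hZ2 := subGamma_moment hZ hZm 1
  have hZ2i : Integrable (fun ω => Z ω ^ 2) μ := by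
    have := hZ2.1; norm_num at this; exact this
  have hm32 : m ≤ 32 * σ2 := by
    have := hZ2.2; norm_num at this; rw [hm]; linarith
  have hmnn : 0 ≤ m := integral_nonneg fun ω => sq_nonneg _
  -- the dominating function and its expansion
  have hexpand : ∀ ω, (Z ω ^ 2 + m) ^ c =
      ∑ j ∈ Finset.range (c + 1), Z ω ^ (2 * j) * (m ^ (c - j) * (c.choose j)) := by
    intro ω
    rw [add_pow]
    refine Finset.sum_congr rfl fun j hj => ?_
    rw [pow_mul]; ring
  have hterm : ∀ j : ℕ, Integrable
      (fun ω => Z ω ^ (2 * j) * (m ^ (c - j) * (c.choose j))) μ :=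
    fun j => ((subGamma_moment hZ hZm j).1).mul_const _
  have hGi : Integrable (fun ω => (Z ω ^ 2 + m) ^ c) μ := by
    have : Integrable (fun ω => ∑ j ∈ Finset.range (c + 1),
        Z ω ^ (2 * j) * (m ^ (c - j) * (c.choose j))) μ :=
      integrable_finset_sum _ fun j _ => hterm j
    exact this.congr (Filter.Eventually.of_forall fun ω => (hexpand ω).symm)
  have hGb : ∫ ω, (Z ω ^ 2 + m) ^ c ∂μ ≤ (2 * c).factorial * 4 * 132 ^ c * σ2 ^ c := by
    have h1 : ∫ ω, (Z ω ^ 2 + m) ^ c ∂μ = ∑ j ∈ Finset.range (c + 1),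
        (∫ ω, Z ω ^ (2 * j) ∂μ) * (m ^ (c - j) * (c.choose j)) := by
      rw [integral_congr_ae (Filter.Eventually.of_forall hexpand),
        integral_finset_sum _ fun j _ => hterm j]
      exact Finset.sum_congr rfl fun j _ => integral_mul_const _ _
    rw [h1]
    have hKmono : ∀ j ∈ Finset.range (c + 1),
        (∫ ω, Z ω ^ (2 * j) ∂μ) * (m ^ (c - j) * (c.choose j)) ≤
          ((2 * c).factorial * 4 * 4 ^ c) * (σ2 ^ c * (32 ^ (c - j) * (c.choose j))) := by
      intro j hj
      have hjc : j ≤ c := Nat.lt_succ_iff.1 (Finset.mem_range.1 hj)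
      have hZj := subGamma_moment hZ hZm j
      have hZjnn : 0 ≤ ∫ ω, Z ω ^ (2 * j) ∂μ :=
        integral_nonneg fun ω => (even_two_mul j).pow_nonneg _
      have hKle : ((2 * j).factorial : ℝ) * 4 * 4 ^ j ≤ (2 * c).factorial * 4 * 4 ^ c := by
        have h1 : (2 * j).factorial ≤ (2 * c).factorial :=
          Nat.factorial_le (by omega)
        have h2 : (4:ℝ) ^ j ≤ 4 ^ c := pow_le_pow_right₀ (by norm_num) hjc
        have h1' : ((2 * j).factorial : ℝ) ≤ (2 * c).factorial := by exact_mod_cast h1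
        have := Nat.factorial_pos (2 * j)
        nlinarith [pow_pos (by norm_num : (0:ℝ) < 4) j]
      have hmj : m ^ (c - j) ≤ 32 ^ (c - j) * σ2 ^ (c - j) := by
        calc m ^ (c - j) ≤ (32 * σ2) ^ (c - j) := pow_le_pow_left₀ hmnn hm32 _
          _ = 32 ^ (c - j) * σ2 ^ (c - j) := mul_pow _ _ _
      have hZjb : ∫ ω, Z ω ^ (2 * j) ∂μ ≤ ((2 * c).factorial * 4 * 4 ^ c) * σ2 ^ j := by
        calc ∫ ω, Z ω ^ (2 * j) ∂μ ≤ (2 * j).factorial * 4 * 4 ^ j * σ2 ^ j := hZj.2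
          _ ≤ ((2 * c).factorial * 4 * 4 ^ c) * σ2 ^ j :=
            mul_le_mul_of_nonneg_right hKle (pow_nonneg hσ2nn _)
      calc (∫ ω, Z ω ^ (2 * j) ∂μ) * (m ^ (c - j) * (c.choose j))
          ≤ (((2 * c).factorial * 4 * 4 ^ c) * σ2 ^ j) * ((32 ^ (c - j) * σ2 ^ (c - j)) * (c.choose j)) := by
            apply mul_le_mul hZjb _ (by positivity) (by positivity)
            exact mul_le_mul_of_nonneg_right hmj (by positivity)
        _ = ((2 * c).factorial * 4 * 4 ^ c) * ((σ2 ^ j * σ2 ^ (c - j)) * (32 ^ (c - j) * (c.choose j))) := by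
            ring
        _ = ((2 * c).factorial * 4 * 4 ^ c) * (σ2 ^ c * (32 ^ (c - j) * (c.choose j))) := by
            rw [← pow_add, Nat.add_sub_cancel' hjc]
    calc ∑ j ∈ Finset.range (c + 1), (∫ ω, Z ω ^ (2 * j) ∂μ) * (m ^ (c - j) * (c.choose j))
        ≤ ∑ j ∈ Finset.range (c + 1),
            ((2 * c).factorial * 4 * 4 ^ c) * (σ2 ^ c * (32 ^ (c - j) * (c.choose j))) :=
          Finset.sum_le_sum hKmono
      _ = ((2 * c).factorial * 4 * 4 ^ c) * σ2 ^ c *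
            ∑ j ∈ Finset.range (c + 1), (1:ℝ) ^ j * 32 ^ (c - j) * (c.choose j) := by
          rw [Finset.mul_sum]; exact Finset.sum_congr rfl fun j _ => by ring
      _ = ((2 * c).factorial * 4 * 4 ^ c) * σ2 ^ c * 33 ^ c := by
          rw [← add_pow (1:ℝ) 32 c]; norm_num
      _ = (2 * c).factorial * 4 * 132 ^ c * σ2 ^ c := by
          have : (132:ℝ) ^ c = 4 ^ c * 33 ^ c := by rw [← mul_pow]; norm_num
          rw [this]; ring
  -- pointwise domination
  have hptw : ∀ ω, |Z ω ^ 2 - m| ^ c ≤ (Z ω ^ 2 + m) ^ c := by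
    intro ω
    apply pow_le_pow_left₀ (abs_nonneg _)
    rcases abs_cases (Z ω ^ 2 - m) with ⟨h, _⟩ | ⟨h, _⟩ <;> nlinarith [sq_nonneg (Z ω)]
  have hXmeas : Measurable (fun ω => (Z ω ^ 2 - m) ^ c) :=
    ((hZm.pow_const 2).sub_const m).pow_const c
  have hXi : Integrable (fun ω => (Z ω ^ 2 - m) ^ c) μ := by
    refine hGi.mono' hXmeas.aestronglyMeasurable ?_
    filter_upwards with ω
    rw [Real.norm_eq_abs, abs_pow]
    exact hptw ω
  have hXa : Integrable (fun ω => |Z ω ^ 2 - m| ^ c) μ := by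
    refine hGi.mono' (((hZm.pow_const 2).sub_const m).abs.pow_const c).aestronglyMeasurable ?_
    filter_upwards with ω
    rw [Real.norm_eq_abs, abs_of_nonneg (by positivity)]
    exact hptw ω
  exact ⟨hXi, le_trans (integral_mono hXa hGi hptw) hGb⟩

lemma iIndep_integral_prod {Ω ι : Type*} [MeasurableSpace Ω] {μ : Measure Ω}
    [IsProbabilityMeasure μ] {X : ι → Ω → ℝ} (hmeas : ∀ i, Measurable (X i))
    (hInd : iIndepFun X μ) (hint : ∀ i, Integrable (X i) μ)
    (s : Finset ι) :
    Integrable (fun ω => ∏ i ∈ s, X i ω) μ ∧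
      (∫ ω, ∏ i ∈ s, X i ω ∂μ) = ∏ i ∈ s, ∫ ω, X i ω ∂μ := by
  classical
  induction s using Finset.cons_induction with
  | empty => simp
  | cons a s ha ih =>
    have hprod : IndepFun (∏ j ∈ s, X j) (X a) μ :=
      hInd.indepFun_finsetProd_of_notMem hmeas ha
    have hpeq : (fun ω => ∏ i ∈ s, X i ω) = ∏ j ∈ s, X j := by
      ext ω; simp [Finset.prod_apply]
    have hIp : Integrable (∏ j ∈ s, X j) μ := by rw [← hpeq]; exact ih.1
    have hmul : Integrable ((∏ j ∈ s, X j) * X a) μ := hprod.integrable_mul hIp (hint a)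
    constructor
    · have : (fun ω => ∏ i ∈ Finset.cons a s ha, X i ω) = (∏ j ∈ s, X j) * X a := by
        ext ω; simp [Finset.prod_insert ha, Finset.prod_apply, mul_comm]
      rw [this]; exact hmul
    · have h1 : (∫ ω, ∏ i ∈ Finset.cons a s ha, X i ω ∂μ)
          = ∫ ω, ((∏ j ∈ s, X j) * X a) ω ∂μ := by
        apply integral_congr_ae; filter_upwards with ω
        simp [Finset.prod_insert ha, Finset.prod_apply, mul_comm]
      rw [h1, hprod.integral_mul_eq_mul_integral hIp.1 (hint a).1, Finset.prod_cons, ← hpeq, ih.2, mul_comm]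

lemma card_small_range {Q : Type*} [Fintype Q] [DecidableEq Q] [Nonempty Q] (L h : ℕ) :
    (Finset.univ.filter (fun f : Fin L → Q => (Finset.univ.image f).card ≤ h)).card ≤
      Fintype.card Q ^ h * h ^ L := by
  classical
  have : (Finset.univ.filter (fun f : Fin L → Q => (Finset.univ.image f).card ≤ h)).card ≤
      (Finset.univ : Finset ((Fin h → Q) × (Fin L → Fin h))).card := by
    apply Finset.card_le_card_of_surjOn (fun p : (Fin h → Q) × (Fin L → Fin h) => p.1 ∘ p.2)
    intro f hf
    simp only [Finset.coe_filter, Set.mem_setOf_eq, Finset.mem_univ, true_and] at hf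
    set s : Finset Q := Finset.univ.image f with hs
    have hcard : s.card ≤ h := hf
    set e := s.equivFin with he
    have hmem : ∀ i : Fin L, f i ∈ s := fun i => Finset.mem_image_of_mem f (Finset.mem_univ i)
    refine ⟨⟨fun i => if hi : (i : ℕ) < s.card then (e.symm ⟨i, hi⟩ : Q) else Classical.arbitrary Q,
      fun i => Fin.castLE hcard (e ⟨f i, hmem i⟩)⟩, Finset.mem_coe.2 (Finset.mem_univ _), ?_⟩
    funext i
    simp only [Function.comp_apply, Fin.coe_castLE]
    have hlt : ((e ⟨f i, hmem i⟩ : Fin s.card) : ℕ) < s.card := (e ⟨f i, hmem i⟩).isLt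
    rw [dif_pos hlt]
    have : (⟨((e ⟨f i, hmem i⟩ : Fin s.card) : ℕ), hlt⟩ : Fin s.card) = e ⟨f i, hmem i⟩ :=
      Fin.ext rfl
    rw [this, Equiv.symm_apply_apply]
  simpa [Fintype.card_fun] using this

lemma moment_sum {Ω Q : Type*} [MeasurableSpace Ω] {μ : Measure Ω} [IsProbabilityMeasure μ]
    [Fintype Q] [Nonempty Q] [DecidableEq Q]
    {X : Q → Ω → ℝ} (hmeas : ∀ q, Measurable (X q))
    (hInd : iIndepFun X μ)
    (L : ℕ) (hL1 : 1 ≤ L)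
    {M s2 : ℝ} (hM : 1 ≤ M) (hs2 : 0 ≤ s2)
    (hintpow : ∀ q c, Integrable (fun ω => X q ω ^ c) μ)
    (hzero : ∀ q, (∫ ω, X q ω ∂μ) = 0)
    (habs : ∀ q c, 1 ≤ c → c ≤ L → ∫ ω, |X q ω| ^ c ∂μ ≤ M ^ c * s2 ^ c) :
    Integrable (fun ω => (∑ q, X q ω) ^ L) μ ∧
      ∫ ω, (∑ q, X q ω) ^ L ∂μ ≤
        (Fintype.card Q : ℝ) ^ (L / 2) * L ^ L * M ^ L * s2 ^ L := by
  classical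
  -- counts and images
  set cnt : (Fin L → Q) → Q → ℕ := fun p q => (Finset.univ.filter fun i => p i = q).card with hcnt
  set img : (Fin L → Q) → Finset Q := fun p => Finset.univ.image p with himg
  have hsum_cnt : ∀ p, ∑ q ∈ img p, cnt p q = L := by
    intro p
    rw [hcnt, himg]
    rw [← Finset.card_eq_sum_card_fiberwise (fun i _ => Finset.mem_image_of_mem p (Finset.mem_univ i))]
    simp
  have hcnt_pos : ∀ p, ∀ q ∈ img p, 1 ≤ cnt p q := by
    intro p q hq
    rw [himg] at hq
    obtain ⟨i, _, rfl⟩ := Finset.mem_image.1 hq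
    exact Finset.card_pos.2 ⟨i, by simp [hcnt]⟩
  have hcnt_le : ∀ p q, cnt p q ≤ L := fun p q => by
    simpa using Finset.card_filter_le (Finset.univ : Finset (Fin L)) _
  -- per-p product formula
  have hprod_eq : ∀ (p : Fin L → Q) (ω : Ω),
      (∏ i, X (p i) ω) = ∏ q ∈ img p, X q ω ^ cnt p q := fun p ω =>
    Finset.prod_comp (fun q => X q ω) p
  have hIndPow : ∀ p : Fin L → Q,
      iIndepFun (fun q ω => X q ω ^ cnt p q) μ := by
    intro p
    exact hInd.comp (fun q x => x ^ cnt p q) (fun q => measurable_id.pow_const _)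
  have hTfacts : ∀ p : Fin L → Q,
      Integrable (fun ω => ∏ i, X (p i) ω) μ ∧
        (∫ ω, ∏ i, X (p i) ω ∂μ) = ∏ q ∈ img p, ∫ ω, X q ω ^ cnt p q ∂μ := by
    intro p
    have h := iIndep_integral_prod (fun q => (hmeas q).pow_const (cnt p q))
      (hIndPow p) (fun q => hintpow q (cnt p q)) (img p)
    constructor
    · exact h.1.congr (Filter.Eventually.of_forall fun ω => (hprod_eq p ω).symm)
    · rw [integral_congr_ae (Filter.Eventually.of_forall fun ω => hprod_eq p ω), h.2]
  -- expansion of the power of the sum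
  have hpow : ∀ ω, (∑ q, X q ω) ^ L = ∑ p : Fin L → Q, ∏ i, X (p i) ω :=
    fun ω => Fintype.sum_pow (fun q => X q ω) L
  have hint : Integrable (fun ω => (∑ q, X q ω) ^ L) μ := by
    have : Integrable (fun ω => ∑ p : Fin L → Q, ∏ i, X (p i) ω) μ :=
      integrable_finset_sum _ fun p _ => (hTfacts p).1
    exact this.congr (Filter.Eventually.of_forall fun ω => (hpow ω).symm)
  refine ⟨hint, ?_⟩
  have hval : ∫ ω, (∑ q, X q ω) ^ L ∂μ
      = ∑ p : Fin L → Q, ∏ q ∈ img p, ∫ ω, X q ω ^ cnt p q ∂μ := by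
    rw [integral_congr_ae (Filter.Eventually.of_forall hpow),
      integral_finset_sum _ fun p _ => (hTfacts p).1]
    exact Finset.sum_congr rfl fun p _ => (hTfacts p).2
  rw [hval]
  -- terms with a singleton fiber vanish
  set good : Finset (Fin L → Q) :=
    Finset.univ.filter (fun p => ∀ q ∈ img p, 2 ≤ cnt p q) with hgood
  have hvanish : ∑ p : Fin L → Q, ∏ q ∈ img p, ∫ ω, X q ω ^ cnt p q ∂μ
      = ∑ p ∈ good, ∏ q ∈ img p, ∫ ω, X q ω ^ cnt p q ∂μ := by
    rw [hgood]
    refine (Finset.sum_filter_of_ne ?_).symm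
    intro p _ hne
    by_contra hbad
    push_neg at hbad
    obtain ⟨q, hq, hlt⟩ := hbad
    have h1 : cnt p q = 1 := le_antisymm (by omega) (hcnt_pos p q hq)
    apply hne
    apply Finset.prod_eq_zero hq
    rw [h1]
    simpa using hzero q
  rw [hvanish]
  -- bound each good term
  have hterm_bound : ∀ p ∈ good, ∏ q ∈ img p, ∫ ω, X q ω ^ cnt p q ∂μ ≤ M ^ L * s2 ^ L := by
    intro p hp
    calc ∏ q ∈ img p, ∫ ω, X q ω ^ cnt p q ∂μ
        ≤ |∏ q ∈ img p, ∫ ω, X q ω ^ cnt p q ∂μ| := le_abs_self _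
      _ = ∏ q ∈ img p, |∫ ω, X q ω ^ cnt p q ∂μ| := Finset.abs_prod _ _
      _ ≤ ∏ q ∈ img p, (M ^ cnt p q * s2 ^ cnt p q) := by
          apply Finset.prod_le_prod (fun q _ => abs_nonneg _)
          intro q hq
          calc |∫ ω, X q ω ^ cnt p q ∂μ| = ‖∫ ω, X q ω ^ cnt p q ∂μ‖ :=
                (Real.norm_eq_abs _).symm
            _ ≤ ∫ ω, ‖X q ω ^ cnt p q‖ ∂μ := norm_integral_le_integral_norm _
            _ = ∫ ω, |X q ω| ^ cnt p q ∂μ := by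
                apply integral_congr_ae; filter_upwards with ω
                rw [Real.norm_eq_abs, abs_pow]
            _ ≤ M ^ cnt p q * s2 ^ cnt p q :=
                habs q _ (hcnt_pos p q hq) (hcnt_le p q)
      _ = M ^ (∑ q ∈ img p, cnt p q) * s2 ^ (∑ q ∈ img p, cnt p q) := by
          rw [Finset.prod_mul_distrib, Finset.prod_pow_eq_pow_sum, Finset.prod_pow_eq_pow_sum]
      _ = M ^ L * s2 ^ L := by rw [hsum_cnt]
  -- cardinality of the good set
  have hgood_card : (good.card : ℝ) ≤ (Fintype.card Q : ℝ) ^ (L / 2) * (L : ℝ) ^ L := by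
    have hsub : good ⊆ Finset.univ.filter
        (fun p : Fin L → Q => (Finset.univ.image p).card ≤ L / 2) := by
      intro p hp
      rw [hgood, Finset.mem_filter] at hp
      rw [Finset.mem_filter]
      refine ⟨Finset.mem_univ _, ?_⟩
      have h2 : 2 * (img p).card ≤ L := by
        calc 2 * (img p).card = ∑ _q ∈ img p, 2 := by rw [Finset.sum_const]; ring
          _ ≤ ∑ q ∈ img p, cnt p q := Finset.sum_le_sum hp.2
          _ = L := hsum_cnt p
      have h2' : 2 * (Finset.univ.image p).card ≤ L := h2
      omega
    have h1 : good.card ≤ Fintype.card Q ^ (L / 2) * (L / 2) ^ L :=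
      le_trans (Finset.card_le_card hsub) (card_small_range L (L / 2))
    have h2 : (L / 2) ^ L ≤ L ^ L := Nat.pow_le_pow_left (Nat.div_le_self L 2) L
    have h3 : good.card ≤ Fintype.card Q ^ (L / 2) * L ^ L :=
      le_trans h1 (Nat.mul_le_mul_left _ h2)
    calc (good.card : ℝ) ≤ ((Fintype.card Q ^ (L / 2) * L ^ L : ℕ) : ℝ) := by exact_mod_cast h3
      _ = (Fintype.card Q : ℝ) ^ (L / 2) * (L : ℝ) ^ L := by push_cast; ring
  -- put it together
  have hMs2 : (0:ℝ) ≤ M ^ L * s2 ^ L := by positivity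
  calc ∑ p ∈ good, ∏ q ∈ img p, ∫ ω, X q ω ^ cnt p q ∂μ
      ≤ ∑ _p ∈ good, M ^ L * s2 ^ L := Finset.sum_le_sum hterm_bound
    _ = (good.card : ℝ) * (M ^ L * s2 ^ L) := by rw [Finset.sum_const, nsmul_eq_mul]
    _ ≤ ((Fintype.card Q : ℝ) ^ (L / 2) * (L : ℝ) ^ L) * (M ^ L * s2 ^ L) :=
        mul_le_mul_of_nonneg_right hgood_card hMs2
    _ = (Fintype.card Q : ℝ) ^ (L / 2) * L ^ L * M ^ L * s2 ^ L := by ring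

set_option maxHeartbeats 2000000 in
/-- Tail bound at the heart of Proposition 4.3: for an even `ℓ ≥ 2`
there is `C_ℓ` such that the empirical second-moment statistic
`ρ̃ = ∑_{i≤j} (A−P)_{ij}² / (16 n (n+1))` of a random symmetric matrix with independent
`(ν,b)`-sub-gamma upper-triangular errors satisfies
`Pr[|ρ̃ − E ρ̃| > t] ≤ C_ℓ (ν + b²)^ℓ / (n t)^ℓ` for every `t > 0`. -/
theorem stmt13 (ℓ : ℕ) (hℓ2 : 2 ≤ ℓ) (hℓeven : Even ℓ) :
    ∃ C : ℝ, 0 < C ∧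
      ∀ (n : ℕ), 1 ≤ n →
      ∀ (Ω : Type) (_ : MeasurableSpace Ω) (μ : Measure Ω), IsProbabilityMeasure μ →
      ∀ (A : Ω → Matrix (Fin n) (Fin n) ℝ), (∀ i j, Measurable fun ω => A ω i j) → (∀ ω, (A ω)ᵀ = A ω) →
      ∀ (P : Matrix (Fin n) (Fin n) ℝ) (ν b : ℝ),
      (∀ i j : Fin n, i ≤ j → IsSubGamma μ (fun ω => (A ω - P) i j) ν b) →
      iIndepFun
        (fun (q : {q : Fin n × Fin n // q.1 ≤ q.2}) ω => (A ω - P) q.1.1 q.1.2) μ →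
      ∀ t : ℝ, 0 < t →
        μ {ω | t <
            |(∑ i, ∑ j, if i ≤ j then ((A ω - P) i j) ^ 2 else 0) / (16 * n * (n + 1) : ℝ)
              - ∫ ω', (∑ i, ∑ j, if i ≤ j then ((A ω' - P) i j) ^ 2 else 0)
                  / (16 * n * (n + 1) : ℝ) ∂μ|}
          ≤ ENNReal.ofReal (C * (ν + b ^ 2) ^ ℓ / ((n : ℝ) * t) ^ ℓ) := by
  classical
  set M : ℝ := ((2 * ℓ).factorial : ℝ) * 4 * 132 with hMdef
  have hM1 : (1:ℝ) ≤ M := by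
    have : (1:ℝ) ≤ ((2 * ℓ).factorial : ℝ) := by exact_mod_cast (2 * ℓ).factorial_pos
    nlinarith
  have hM0 : (0:ℝ) < M := lt_of_lt_of_le one_pos hM1
  refine ⟨(ℓ:ℝ) ^ ℓ * M ^ ℓ, by positivity, ?_⟩
  intro n hn Ω mΩ μ hμ A hAmeas _hAsymm P ν b hSG hInd t ht
  have hℓ1 : 1 ≤ ℓ := by omega
  have hn0 : 0 < n := hn
  set Q := {q : Fin n × Fin n // q.1 ≤ q.2} with hQdef
  haveI : Nonempty Q := ⟨⟨(⟨0, hn0⟩, ⟨0, hn0⟩), le_refl _⟩⟩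
  set Z : Q → Ω → ℝ := fun q ω => (A ω - P) q.1.1 q.1.2 with hZdef
  have hZmeas : ∀ q : Q, Measurable (Z q) := by
    intro q
    have : Z q = fun ω => A ω q.1.1 q.1.2 - P q.1.1 q.1.2 := by
      funext ω; simp [hZdef, Matrix.sub_apply]
    rw [this]
    exact (hAmeas _ _).sub_const _
  have hZsg : ∀ q : Q, IsSubGamma μ (Z q) ν b := fun q => hSG q.1.1 q.1.2 q.2
  have hν : 0 ≤ ν := (hZsg (Classical.arbitrary Q)).1
  have hb : 0 ≤ b := (hZsg (Classical.arbitrary Q)).2.1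
  set σ2 : ℝ := ν + b ^ 2 with hσ2def
  have hσ2 : 0 ≤ σ2 := by positivity
  set m : Q → ℝ := fun q => ∫ ω', Z q ω' ^ 2 ∂μ with hmdef
  set X : Q → Ω → ℝ := fun q ω => Z q ω ^ 2 - m q with hXdef
  have hXmeas : ∀ q, Measurable (X q) := fun q => ((hZmeas q).pow_const 2).sub_const _
  have hXind : iIndepFun X μ :=
    hInd.comp (fun q x => x ^ 2 - m q) (fun q => (measurable_id.pow_const 2).sub_const _)
  have hcsm := fun (q : Q) (c : ℕ) => centered_sq_moment (hZsg q) (hZmeas q) c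
  have hZ2i : ∀ q, Integrable (fun ω => Z q ω ^ 2) μ := by
    intro q
    have := (subGamma_moment (hZsg q) (hZmeas q) 1).1
    norm_num at this; exact this
  have hintpow : ∀ q c, Integrable (fun ω => X q ω ^ c) μ := fun q c => (hcsm q c).1
  have hXzero : ∀ q, (∫ ω, X q ω ∂μ) = 0 := by
    intro q
    rw [hXdef]
    simp only
    rw [integral_sub (hZ2i q) (integrable_const _), integral_const]
    simp [hmdef]
  have hcoef : ∀ c : ℕ, 1 ≤ c → c ≤ ℓ →
      (((2 * c).factorial : ℝ) * 4 * 132 ^ c) ≤ M ^ c := by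
    intro c h1c hcℓ
    have hf : ((2 * c).factorial : ℝ) ≤ ((2 * ℓ).factorial : ℝ) := by
      exact_mod_cast Nat.factorial_le (by omega)
    have hfl1 : (1:ℝ) ≤ ((2 * ℓ).factorial : ℝ) * 4 := by
      have : (1:ℝ) ≤ ((2 * ℓ).factorial : ℝ) := by exact_mod_cast (2 * ℓ).factorial_pos
      nlinarith
    calc ((2 * c).factorial : ℝ) * 4 * 132 ^ c
        ≤ (((2 * ℓ).factorial : ℝ) * 4) * 132 ^ c := by
          have : (0:ℝ) < 132 ^ c := by positivity
          nlinarith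
      _ ≤ (((2 * ℓ).factorial : ℝ) * 4) ^ c * 132 ^ c := by
          have := le_self_pow₀ hfl1 (by omega : c ≠ 0)
          have h132 : (0:ℝ) ≤ (132:ℝ) ^ c := by positivity
          nlinarith
      _ = M ^ c := by rw [hMdef, ← mul_pow]
  have habs : ∀ q c, 1 ≤ c → c ≤ ℓ → ∫ ω, |X q ω| ^ c ∂μ ≤ M ^ c * σ2 ^ c := by
    intro q c h1c hcl
    calc ∫ ω, |X q ω| ^ c ∂μ ≤ ((2 * c).factorial : ℝ) * 4 * 132 ^ c * σ2 ^ c := (hcsm q c).2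
      _ ≤ M ^ c * σ2 ^ c :=
        mul_le_mul_of_nonneg_right (hcoef c h1c hcl) (by positivity)
  obtain ⟨hSint, hSbound⟩ := moment_sum hXmeas hXind ℓ hℓ1 hM1 hσ2 hintpow hXzero habs
  -- card bound
  have hcard : ((Fintype.card Q : ℝ)) ^ (ℓ / 2) ≤ (n:ℝ) ^ ℓ := by
    have h1 : Fintype.card Q ≤ Fintype.card (Fin n × Fin n) :=
      Fintype.card_le_of_injective Subtype.val Subtype.val_injective
    have h2 : Fintype.card (Fin n × Fin n) = n * n := by simp
    have h3 : ((Fintype.card Q : ℝ)) ≤ (n:ℝ) ^ 2 := by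
      rw [h2] at h1
      calc ((Fintype.card Q : ℝ)) ≤ ((n * n : ℕ) : ℝ) := by exact_mod_cast h1
        _ = (n:ℝ) ^ 2 := by push_cast; ring
    calc ((Fintype.card Q : ℝ)) ^ (ℓ / 2) ≤ ((n:ℝ) ^ 2) ^ (ℓ / 2) :=
          pow_le_pow_left₀ (by positivity) h3 _
      _ = (n:ℝ) ^ (2 * (ℓ / 2)) := by rw [← pow_mul]
      _ = (n:ℝ) ^ ℓ := by rw [Nat.two_mul_div_two_of_even hℓeven]
  have hSbound' : ∫ ω, (∑ q, X q ω) ^ ℓ ∂μ ≤ (n:ℝ) ^ ℓ * (ℓ:ℝ) ^ ℓ * M ^ ℓ * σ2 ^ ℓ := by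
    refine le_trans hSbound ?_
    have : (0:ℝ) ≤ (ℓ:ℝ) ^ ℓ * M ^ ℓ * σ2 ^ ℓ := by positivity
    calc (Fintype.card Q : ℝ) ^ (ℓ / 2) * (ℓ:ℝ) ^ ℓ * M ^ ℓ * σ2 ^ ℓ
        = (Fintype.card Q : ℝ) ^ (ℓ / 2) * ((ℓ:ℝ) ^ ℓ * M ^ ℓ * σ2 ^ ℓ) := by ring
      _ ≤ (n:ℝ) ^ ℓ * ((ℓ:ℝ) ^ ℓ * M ^ ℓ * σ2 ^ ℓ) := mul_le_mul_of_nonneg_right hcard this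
      _ = (n:ℝ) ^ ℓ * (ℓ:ℝ) ^ ℓ * M ^ ℓ * σ2 ^ ℓ := by ring
  -- rewrite the event
  set N : ℝ := 16 * n * (n + 1) with hNdef
  have hN : (0:ℝ) < N := by
    rw [hNdef]; positivity
  set g : Ω → ℝ := fun ω => ∑ i, ∑ j, if i ≤ j then ((A ω - P) i j) ^ 2 else 0 with hgdef
  have hgsum : ∀ ω, g ω = ∑ q : Q, Z q ω ^ 2 := by
    intro ω
    rw [hgdef]
    simp only
    rw [← Finset.sum_product', ← Finset.sum_filter]
    exact Finset.sum_subtype _ (by simp) _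
  have hgint : Integrable g μ := by
    have : Integrable (fun ω => ∑ q : Q, Z q ω ^ 2) μ :=
      integrable_finset_sum _ fun q _ => hZ2i q
    exact this.congr (Filter.Eventually.of_forall fun ω => (hgsum ω).symm)
  have hgI : ∫ ω, g ω ∂μ = ∑ q : Q, m q := by
    rw [integral_congr_ae (Filter.Eventually.of_forall hgsum),
      integral_finset_sum _ fun q _ => hZ2i q]
  set S : Ω → ℝ := fun ω => ∑ q, X q ω with hSdef
  have hgS : ∀ ω, g ω - ∫ ω', g ω' ∂μ = S ω := by
    intro ω
    rw [hgI, hgsum ω, hSdef]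
    simp only [hXdef]
    rw [← Finset.sum_sub_distrib]
  have hinner : ∀ ω, g ω / N - (∫ ω', g ω' / N ∂μ) = S ω / N := by
    intro ω
    rw [integral_div, div_sub_div_same, hgS]
  -- event inclusion and Markov
  have hsub : {ω | t < |g ω / N - ∫ ω', g ω' / N ∂μ|} ⊆
      {ω | (t * N) ^ ℓ ≤ (fun ω' => S ω' ^ ℓ) ω} := by
    intro ω hω
    simp only [Set.mem_setOf_eq] at hω ⊢
    rw [hinner ω, abs_div, abs_of_pos hN] at hω
    have h1 : t * N < |S ω| := by
      rw [lt_div_iff₀ hN] at hω; linarith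
    calc (t * N) ^ ℓ ≤ |S ω| ^ ℓ :=
        pow_le_pow_left₀ (by positivity) h1.le ℓ
      _ = S ω ^ ℓ := hℓeven.pow_abs _
  have hnonneg : 0 ≤ᵐ[μ] fun ω => S ω ^ ℓ :=
    Filter.Eventually.of_forall fun ω => hℓeven.pow_nonneg _
  have hMarkov := mul_meas_ge_le_integral_of_nonneg hnonneg hSint ((t * N) ^ ℓ)
  have htN : (0:ℝ) < (t * N) ^ ℓ := by positivity
  have hfin : μ {ω | t < |g ω / N - ∫ ω', g ω' / N ∂μ|} ≠ ⊤ := measure_ne_top μ _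
  rw [ENNReal.le_ofReal_iff_toReal_le hfin (by positivity)]
  have hmono : (μ {ω | t < |g ω / N - ∫ ω', g ω' / N ∂μ|}).toReal ≤
      (μ {ω | (t * N) ^ ℓ ≤ (fun ω' => S ω' ^ ℓ) ω}).toReal :=
    ENNReal.toReal_mono (measure_ne_top μ _) (measure_mono hsub)
  have hmark2 : (μ {ω | (t * N) ^ ℓ ≤ (fun ω' => S ω' ^ ℓ) ω}).toReal ≤
      (∫ ω, S ω ^ ℓ ∂μ) / (t * N) ^ ℓ := by
    rw [le_div_iff₀ htN]
    calc (μ {ω | (t * N) ^ ℓ ≤ (fun ω' => S ω' ^ ℓ) ω}).toReal * (t * N) ^ ℓ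
        = (t * N) ^ ℓ * (μ {ω | (t * N) ^ ℓ ≤ (fun ω' => S ω' ^ ℓ) ω}).toReal := mul_comm _ _
      _ ≤ ∫ ω, S ω ^ ℓ ∂μ := hMarkov
  refine le_trans (le_trans hmono hmark2) ?_
  -- final arithmetic
  have hSb2 : (∫ ω, S ω ^ ℓ ∂μ) ≤ (n:ℝ) ^ ℓ * (ℓ:ℝ) ^ ℓ * M ^ ℓ * σ2 ^ ℓ := hSbound'
  have hnt : (0:ℝ) < ((n:ℝ) * t) ^ ℓ := by positivity
  rw [div_le_div_iff₀ htN hnt]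
  calc (∫ ω, S ω ^ ℓ ∂μ) * ((n:ℝ) * t) ^ ℓ
      ≤ ((n:ℝ) ^ ℓ * (ℓ:ℝ) ^ ℓ * M ^ ℓ * σ2 ^ ℓ) * ((n:ℝ) * t) ^ ℓ := by
        apply mul_le_mul_of_nonneg_right hSb2 (by positivity)
    _ = ((ℓ:ℝ) ^ ℓ * M ^ ℓ * σ2 ^ ℓ) * ((n:ℝ) * ((n:ℝ) * t)) ^ ℓ := by
        rw [mul_pow (n:ℝ) ((n:ℝ) * t) ℓ]; ring
    _ ≤ ((ℓ:ℝ) ^ ℓ * M ^ ℓ * σ2 ^ ℓ) * (t * N) ^ ℓ := by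
        apply mul_le_mul_of_nonneg_left _ (by positivity)
        apply pow_le_pow_left₀ (by positivity)
        rw [hNdef]
        push_cast
        nlinarith [ht, (by exact_mod_cast hn : (1:ℝ) ≤ (n:ℝ))]
    _ = (ℓ:ℝ) ^ ℓ * M ^ ℓ * σ2 ^ ℓ * (t * N) ^ ℓ := by ring
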